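/- Let G be a group, H₁, …, Hₘ subgroups of G, and X a finite subset of G which generates G (in the usual, non-relative, sense). Then the relative Cayley graph Γ^rel_X(G) of G with respect to {H₁, …, Hₘ} is hyperbolic if and only if the coned-off Cayley graph Γ̂_X(G) of G with respect to {H₁, …, Hₘ} is hyperbolic. -/

import Mathlib

/-- The Cayley graph of a group `G` with respect to a set `S` of generators: two distinct
elements `a b : G` are adjacent iff they differ by right multiplication by an element of
`S` or the inverse of an element of `S`. -/
def cayleyGraph (G : Type*) [Group G] (S : Set G) : SimpleGraph G where
  Adj a b := a ≠ b ∧ (a⁻¹ * b ∈ S ∨ b⁻¹ * a ∈ S)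
  symm := by
    constructor
    rintro a b ⟨hne, h⟩
    exact ⟨hne.symm, h.symm⟩
  loopless := by constructor; rintro a ⟨hne, -⟩; exact hne rfl

/-- A walk in a graph is a (discrete) geodesic if its length equals the combinatorial
distance between its endpoints. -/
def SimpleGraph.IsGeodesic {V : Type*} (Γ : SimpleGraph V) {u v : V} (p : Γ.Walk u v) : Prop :=
  p.length = Γ.dist u v

/-- A graph is hyperbolic (as a geodesic metric space, with the combinatorial metric in
which every edge has length `1`) iff there is `δ ≥ 0` such that each side of every
geodesic triangle is contained in the closed `δ`-neighbourhood of the union of the other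
two sides. -/
def SimpleGraph.IsHyperbolic {V : Type*} (Γ : SimpleGraph V) : Prop :=
  ∃ δ : ℕ, ∀ (u v w : V) (p : Γ.Walk u v) (q : Γ.Walk v w) (r : Γ.Walk u w),
    Γ.IsGeodesic p → Γ.IsGeodesic q → Γ.IsGeodesic r →
    ∀ x ∈ r.support, ∃ y, (y ∈ p.support ∨ y ∈ q.support) ∧ Γ.dist x y ≤ δ

/-- `X ⊆ G` is a relative generating set of `G` with respect to the collection of
subgroups `H i`, i.e. `G` is generated by `X` together with all the `H i`. -/
def IsRelGenSet {G : Type*} [Group G] {ι : Type*} (H : ι → Subgroup G) (X : Set G) : Prop :=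
  Subgroup.closure (X ∪ ⋃ i, (H i : Set G)) = ⊤

/-- The relative Cayley graph of `G` with respect to the collection of subgroups `H i`
and the set `X`: the Cayley graph of `G` with respect to the generating set
`X ∪ ⋃ i, H i`. -/
def relCayleyGraph (G : Type*) [Group G] {ι : Type*} (H : ι → Subgroup G) (X : Set G) :
    SimpleGraph G :=
  cayleyGraph G (X ∪ ⋃ i, (H i : Set G))

/-- `G` is weakly hyperbolic relative to the collection of subgroups `H i` if there is a
finite relative generating set `X` of `G` with respect to the `H i` such that the
corresponding relative Cayley graph is hyperbolic. -/
def IsWeaklyRelativelyHyperbolic (G : Type*) [Group G] {ι : Type*} (H : ι → Subgroup G) :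
    Prop :=
  ∃ X : Set G, X.Finite ∧ IsRelGenSet H X ∧ (relCayleyGraph G H X).IsHyperbolic

/-- The coned-off Cayley graph of `G` with respect to the collection of subgroups `H i`
and the generating set `X`: the Cayley graph of `G` with respect to `X`, together with a
cone vertex for each left coset `g • H i` joined to all elements of that coset. -/
def conedOffGraph (G : Type*) [Group G] {ι : Type*} (H : ι → Subgroup G) (X : Set G) :
    SimpleGraph (G ⊕ Σ i : ι, G ⧸ H i) where
  Adj v w :=
    match v, w with
    | .inl a, .inl b => a ≠ b ∧ (a⁻¹ * b ∈ X ∨ b⁻¹ * a ∈ X)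
    | .inl a, .inr c => (a : G ⧸ H c.1) = c.2
    | .inr c, .inl a => (a : G ⧸ H c.1) = c.2
    | .inr _, .inr _ => False
  symm := by
    constructor
    rintro (a | c) (b | d) h
    · exact ⟨h.1.symm, h.2.symm⟩
    · exact h
    · exact h
    · exact h.elim
  loopless := by constructor; rintro (a | c) h <;> simp_all

/-- In the coned-off Cayley graph, ordinary Cayley edges have length `1` while cone edges
have length `1 / 2`. -/
noncomputable def conedStepLength {G : Type*} [Group G] {ι : Type*} {H : ι → Subgroup G} :
    (G ⊕ Σ i : ι, G ⧸ H i) → (G ⊕ Σ i : ι, G ⧸ H i) → ℝ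
  | .inl _, .inl _ => 1
  | _, _ => 1 / 2

/-- The length of a walk in the coned-off Cayley graph, where Cayley edges have length
`1` and cone edges have length `1 / 2`. -/
noncomputable def conedWalkLength {G : Type*} [Group G] {ι : Type*} {H : ι → Subgroup G}
    {X : Set G} {u v : G ⊕ Σ i : ι, G ⧸ H i} (p : (conedOffGraph G H X).Walk u v) : ℝ :=
  (p.darts.map fun d => conedStepLength d.toProd.1 d.toProd.2).sum

/-- The combinatorial (path) metric of the coned-off Cayley graph. -/
noncomputable def conedDist (G : Type*) [Group G] {ι : Type*} (H : ι → Subgroup G)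
    (X : Set G) (u v : G ⊕ Σ i : ι, G ⧸ H i) : ℝ :=
  sInf (Set.range fun p : (conedOffGraph G H X).Walk u v => conedWalkLength p)

/-- A walk in the coned-off Cayley graph is a geodesic if it has minimal length among all
walks with the same endpoints. -/
def ConedIsGeodesic {G : Type*} [Group G] {ι : Type*} {H : ι → Subgroup G} {X : Set G}
    {u v : G ⊕ Σ i : ι, G ⧸ H i} (p : (conedOffGraph G H X).Walk u v) : Prop :=
  ∀ q : (conedOffGraph G H X).Walk u v, conedWalkLength p ≤ conedWalkLength q

/-- The coned-off Cayley graph is hyperbolic: there is `δ ≥ 0` such that each side of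
every geodesic triangle is contained in the closed `δ`-neighbourhood (with respect to its
combinatorial path metric) of the union of the other two sides. -/
def ConedOffIsHyperbolic (G : Type*) [Group G] {ι : Type*} (H : ι → Subgroup G)
    (X : Set G) : Prop :=
  ∃ δ : ℝ, 0 ≤ δ ∧ ∀ (u v w : G ⊕ Σ i : ι, G ⧸ H i) (p : (conedOffGraph G H X).Walk u v)
    (q : (conedOffGraph G H X).Walk v w) (r : (conedOffGraph G H X).Walk u w),
    ConedIsGeodesic p → ConedIsGeodesic q → ConedIsGeodesic r →
    ∀ x ∈ r.support, ∃ y, (y ∈ p.support ∨ y ∈ q.support) ∧ conedDist G H X x y ≤ δ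

section Aux

open SimpleGraph

variable {G : Type*} [Group G] {ι : Type*} {H : ι → Subgroup G} {X : Set G}

lemma conedStepLength_nonneg (a b : G ⊕ Σ i : ι, G ⧸ H i) :
    0 ≤ conedStepLength (H := H) a b := by
  rcases a with a | a <;> rcases b with b | b <;> norm_num [conedStepLength]

lemma conedStepLength_symm (a b : G ⊕ Σ i : ι, G ⧸ H i) :
    conedStepLength (H := H) a b = conedStepLength b a := by
  rcases a with a | a <;> rcases b with b | b <;> rfl

lemma conedWalkLength_nil {u : G ⊕ Σ i : ι, G ⧸ H i} :
    conedWalkLength (Walk.nil : (conedOffGraph G H X).Walk u u) = 0 := by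
  simp [conedWalkLength]

lemma conedWalkLength_cons {u v w : G ⊕ Σ i : ι, G ⧸ H i}
    (h : (conedOffGraph G H X).Adj u v) (p : (conedOffGraph G H X).Walk v w) :
    conedWalkLength (Walk.cons h p) = conedStepLength u v + conedWalkLength p := by
  simp [conedWalkLength, Walk.darts_cons]

lemma conedWalkLength_append {u v w : G ⊕ Σ i : ι, G ⧸ H i}
    (p : (conedOffGraph G H X).Walk u v) (q : (conedOffGraph G H X).Walk v w) :
    conedWalkLength (p.append q) = conedWalkLength p + conedWalkLength q := by
  simp [conedWalkLength, Walk.darts_append]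

lemma conedWalkLength_nonneg {u v : G ⊕ Σ i : ι, G ⧸ H i}
    (p : (conedOffGraph G H X).Walk u v) : 0 ≤ conedWalkLength p := by
  apply List.sum_nonneg
  intro x hx
  simp only [List.mem_map] at hx
  obtain ⟨d, -, rfl⟩ := hx
  exact conedStepLength_nonneg _ _

lemma conedWalkLength_reverse {u v : G ⊕ Σ i : ι, G ⧸ H i}
    (p : (conedOffGraph G H X).Walk u v) :
    conedWalkLength p.reverse = conedWalkLength p := by
  unfold conedWalkLength
  rw [Walk.darts_reverse, List.map_reverse, List.sum_reverse, List.map_map]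
  congr 1
  apply List.map_congr_left
  intro d _
  simp only [Function.comp_apply, Dart.symm_toProd, Prod.fst_swap, Prod.snd_swap]
  exact conedStepLength_symm _ _

lemma conedWalkLength_half_integral {u v : G ⊕ Σ i : ι, G ⧸ H i}
    (p : (conedOffGraph G H X).Walk u v) : ∃ n : ℕ, conedWalkLength p = n / 2 := by
  induction p with
  | nil => exact ⟨0, by simp [conedWalkLength_nil]⟩
  | cons h p ih =>
    obtain ⟨n, hn⟩ := ih
    rename_i a b c
    have : ∃ k : ℕ, conedStepLength (H := H) a b = k / 2 := by
      rcases a with a | a <;> rcases b with b | b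
      · exact ⟨2, by norm_num [conedStepLength]⟩
      · exact ⟨1, by norm_num [conedStepLength]⟩
      · exact ⟨1, by norm_num [conedStepLength]⟩
      · exact ⟨1, by norm_num [conedStepLength]⟩
    obtain ⟨k, hk⟩ := this
    refine ⟨k + n, ?_⟩
    rw [conedWalkLength_cons, hn, hk]
    push_cast
    ring

lemma bddBelow_conedWalkLength (u v : G ⊕ Σ i : ι, G ⧸ H i) :
    BddBelow (Set.range fun p : (conedOffGraph G H X).Walk u v => conedWalkLength p) := by
  refine ⟨0, ?_⟩
  rintro x ⟨p, rfl⟩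
  exact conedWalkLength_nonneg p

lemma conedDist_le_walk {u v : G ⊕ Σ i : ι, G ⧸ H i}
    (p : (conedOffGraph G H X).Walk u v) : conedDist G H X u v ≤ conedWalkLength p :=
  csInf_le (bddBelow_conedWalkLength u v) ⟨p, rfl⟩

lemma conedDist_nonneg (u v : G ⊕ Σ i : ι, G ⧸ H i) : 0 ≤ conedDist G H X u v :=
  Real.sInf_nonneg (by rintro x ⟨p, rfl⟩; exact conedWalkLength_nonneg p)

open scoped Classical in
lemma coned_exists_min {u v : G ⊕ Σ i : ι, G ⧸ H i}
    (hne : Nonempty ((conedOffGraph G H X).Walk u v)) :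
    ∃ p : (conedOffGraph G H X).Walk u v, conedWalkLength p = conedDist G H X u v := by
  have hT : ∃ n : ℕ, ∃ p : (conedOffGraph G H X).Walk u v, conedWalkLength p = n / 2 := by
    obtain ⟨p⟩ := hne
    obtain ⟨n, hn⟩ := conedWalkLength_half_integral p
    exact ⟨n, p, hn⟩
  obtain ⟨p₀, hp₀⟩ := Nat.find_spec hT
  refine ⟨p₀, le_antisymm ?_ (conedDist_le_walk p₀)⟩
  apply le_csInf
  · exact ⟨_, ⟨p₀, rfl⟩⟩
  · rintro x ⟨q, rfl⟩
    obtain ⟨n, hn⟩ := conedWalkLength_half_integral q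
    have : Nat.find hT ≤ n := Nat.find_min' hT ⟨q, hn⟩
    show _ ≤ conedWalkLength q
    rw [hp₀, hn]
    gcongr

lemma conedDist_symm (u v : G ⊕ Σ i : ι, G ⧸ H i) :
    conedDist G H X u v = conedDist G H X v u := by
  unfold conedDist
  congr 1
  ext x
  constructor
  · rintro ⟨p, rfl⟩
    exact ⟨p.reverse, conedWalkLength_reverse p⟩
  · rintro ⟨p, rfl⟩
    exact ⟨p.reverse, conedWalkLength_reverse p⟩

lemma conedDist_triangle {u v w : G ⊕ Σ i : ι, G ⧸ H i}
    (h1 : Nonempty ((conedOffGraph G H X).Walk u v))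
    (h2 : Nonempty ((conedOffGraph G H X).Walk v w)) :
    conedDist G H X u w ≤ conedDist G H X u v + conedDist G H X v w := by
  obtain ⟨p, hp⟩ := coned_exists_min h1
  obtain ⟨q, hq⟩ := coned_exists_min h2
  calc conedDist G H X u w ≤ conedWalkLength (p.append q) := conedDist_le_walk _
    _ = _ := by rw [conedWalkLength_append, hp, hq]

end Aux
section Aux2

open SimpleGraph

variable {G : Type*} [Group G] {ι : Type*} {H : ι → Subgroup G} {X : Set G}

lemma relAdj_iff {a b : G} : (relCayleyGraph G H X).Adj a b ↔
    a ≠ b ∧ (a⁻¹ * b ∈ X ∪ ⋃ i, (H i : Set G) ∨ b⁻¹ * a ∈ X ∪ ⋃ i, (H i : Set G)) :=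
  Iff.rfl

lemma conedAdj_inl_inl {a b : G} : (conedOffGraph G H X).Adj (.inl a) (.inl b) ↔
    a ≠ b ∧ (a⁻¹ * b ∈ X ∨ b⁻¹ * a ∈ X) := Iff.rfl

lemma conedAdj_inl_inr {a : G} {c : Σ i : ι, G ⧸ H i} :
    (conedOffGraph G H X).Adj (.inl a) (.inr c) ↔ (a : G ⧸ H c.1) = c.2 := Iff.rfl

lemma conedAdj_inr_inl {a : G} {c : Σ i : ι, G ⧸ H i} :
    (conedOffGraph G H X).Adj (.inr c) (.inl a) ↔ (a : G ⧸ H c.1) = c.2 := Iff.rfl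

lemma conedDist_self (u : G ⊕ Σ i : ι, G ⧸ H i) : conedDist G H X u u ≤ 0 := by
  have := conedDist_le_walk (Walk.nil : (conedOffGraph G H X).Walk u u)
  rwa [conedWalkLength_nil] at this

lemma conedDist_le_step {u v : G ⊕ Σ i : ι, G ⧸ H i} (h : (conedOffGraph G H X).Adj u v) :
    conedDist G H X u v ≤ conedStepLength u v := by
  have := conedDist_le_walk (Walk.cons h Walk.nil)
  rwa [conedWalkLength_cons, conedWalkLength_nil, add_zero] at this

lemma conedDist_cone_left {a : G} {c : Σ i : ι, G ⧸ H i}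
    (h : (conedOffGraph G H X).Adj (.inl a) (.inr c)) :
    conedDist G H X (.inl a) (.inr c) ≤ 1 / 2 :=
  conedDist_le_step h

lemma conedDist_cone_right {a : G} {c : Σ i : ι, G ⧸ H i}
    (h : (conedOffGraph G H X).Adj (.inr c) (.inl a)) :
    conedDist G H X (.inr c) (.inl a) ≤ 1 / 2 :=
  conedDist_le_step h

/-- One relative edge gives a coned path of length one whose support stays close to
the endpoints. -/
lemma coned_step {a b : G} (h : (relCayleyGraph G H X).Adj a b) :
    ∃ w : (conedOffGraph G H X).Walk (.inl a) (.inl b), conedWalkLength w = 1 ∧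
      ∀ x ∈ w.support, conedDist G H X x (.inl a) ≤ 1 / 2 ∨
        conedDist G H X x (.inl b) ≤ 1 / 2 := by
  obtain ⟨hne, hmem⟩ := relAdj_iff.mp h
  have hcases : (a⁻¹ * b ∈ X ∨ b⁻¹ * a ∈ X) ∨ ∃ i, a⁻¹ * b ∈ H i := by
    rcases hmem with h1 | h1
    · rcases h1 with h1 | h1
      · exact Or.inl (Or.inl h1)
      · obtain ⟨s, ⟨i, rfl⟩, hs⟩ := h1
        exact Or.inr ⟨i, hs⟩
    · rcases h1 with h1 | h1
      · exact Or.inl (Or.inr h1)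
      · obtain ⟨s, ⟨i, rfl⟩, hs⟩ := h1
        refine Or.inr ⟨i, ?_⟩
        have := (H i).inv_mem hs
        simpa using this
  rcases hcases with hX | ⟨i, hi⟩
  · refine ⟨Walk.cons (conedAdj_inl_inl.mpr ⟨hne, hX⟩) Walk.nil, ?_, ?_⟩
    · rw [conedWalkLength_cons, conedWalkLength_nil]
      norm_num [conedStepLength]
    · intro x hx
      simp only [Walk.support_cons, Walk.support_nil, List.mem_cons,
        List.mem_singleton, List.not_mem_nil, or_false] at hx
      rcases hx with rfl | rfl
      · exact Or.inl ((conedDist_self _).trans (by norm_num))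
      · exact Or.inr ((conedDist_self _).trans (by norm_num))
  · have e1 : (conedOffGraph G H X).Adj (.inl a) (.inr ⟨i, (a : G ⧸ H i)⟩) := rfl
    have e2 : (conedOffGraph G H X).Adj (.inr ⟨i, (a : G ⧸ H i)⟩) (.inl b) := by
      rw [conedAdj_inr_inl]
      exact QuotientGroup.eq.mpr (by simpa using (H i).inv_mem hi)
    refine ⟨Walk.cons e1 (Walk.cons e2 Walk.nil), ?_, ?_⟩
    · rw [conedWalkLength_cons, conedWalkLength_cons, conedWalkLength_nil]
      norm_num [conedStepLength]
    · intro x hx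
      simp only [Walk.support_cons, Walk.support_nil, List.mem_cons,
        List.not_mem_nil, or_false] at hx
      rcases hx with rfl | rfl | rfl
      · exact Or.inl ((conedDist_self _).trans (by norm_num))
      · refine Or.inl ?_
        rw [conedDist_symm]
        exact conedDist_cone_left e1
      · exact Or.inr ((conedDist_self _).trans (by norm_num))

/-- Lifting a relative walk to the coned-off graph. -/
lemma lift_exists {a b : G} (p : (relCayleyGraph G H X).Walk a b) :
    ∃ w : (conedOffGraph G H X).Walk (.inl a) (.inl b),
      conedWalkLength w = p.length ∧
      (∀ x ∈ w.support, ∃ z ∈ p.support, conedDist G H X x (.inl z) ≤ 1 / 2) ∧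
      (∀ z ∈ p.support, Sum.inl z ∈ w.support) := by
  induction p with
  | nil =>
    refine ⟨Walk.nil, by simp [conedWalkLength_nil], ?_, ?_⟩
    · intro x hx
      simp only [Walk.support_nil, List.mem_singleton] at hx
      subst hx
      exact ⟨_, Walk.start_mem_support _, (conedDist_self _).trans (by norm_num)⟩
    · intro z hz
      simp only [Walk.support_nil, List.mem_singleton] at hz
      subst hz
      simp
  | cons h p ih =>
    obtain ⟨w₀, hw₀, hsupp₀⟩ := coned_step h
    obtain ⟨w', hw', hsupp', hsupp'2⟩ := ih
    refine ⟨w₀.append w', ?_, ?_, ?_⟩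
    · rw [conedWalkLength_append, hw₀, hw']
      simp [Walk.length_cons]
      push_cast
      ring
    · intro x hx
      rw [Walk.mem_support_append_iff] at hx
      rcases hx with hx | hx
      · rcases hsupp₀ x hx with h1 | h1
        · exact ⟨_, by simp [Walk.support_cons], h1⟩
        · exact ⟨_, by simp [Walk.support_cons], h1⟩
      · obtain ⟨z, hz, hzd⟩ := hsupp' x hx
        exact ⟨z, by simp [Walk.support_cons, hz], hzd⟩
    · intro z hz
      rw [Walk.support_cons, List.mem_cons] at hz
      rw [Walk.mem_support_append_iff]
      rcases hz with rfl | hz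
      · exact Or.inl (Walk.start_mem_support _)
      · exact Or.inr (hsupp'2 z hz)

end Aux2
section Aux3

open SimpleGraph

variable {G : Type*} [Group G] {ι : Type*} {H : ι → Subgroup G} {X : Set G}

/-- Projecting a coned walk between group elements to a relative walk. -/
lemma proj_exists_aux (n : ℕ) : ∀ {a b : G} (w : (conedOffGraph G H X).Walk (.inl a) (.inl b)),
    w.length ≤ n →
    ∃ p : (relCayleyGraph G H X).Walk a b,
      (p.length : ℝ) ≤ conedWalkLength w ∧
      (∀ x ∈ w.support, ∃ z ∈ p.support, conedDist G H X x (.inl z) ≤ 1 / 2) ∧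
      (∀ z ∈ p.support, Sum.inl z ∈ w.support) := by
  induction n with
  | zero =>
    intro a b w hw
    have : w.length = 0 := Nat.le_zero.mp hw
    obtain rfl : a = b := by
      cases w with
      | nil => rfl
      | cons h p => simp [Walk.length_cons] at this
    cases w with
    | cons h p => simp [Walk.length_cons] at this
    | nil =>
      refine ⟨Walk.nil, by simp [conedWalkLength_nil], ?_, ?_⟩
      · intro x hx
        simp only [Walk.support_nil, List.mem_singleton] at hx
        subst hx
        exact ⟨_, Walk.start_mem_support _, (conedDist_self _).trans (by norm_num)⟩
      · intro z hz
        simp only [Walk.support_nil, List.mem_singleton] at hz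
        subst hz
        simp
  | succ n ih =>
    intro a b w hw
    cases w with
    | nil =>
      refine ⟨Walk.nil, by simp [conedWalkLength_nil], ?_, ?_⟩
      · intro x hx
        simp only [Walk.support_nil, List.mem_singleton] at hx
        subst hx
        exact ⟨_, Walk.start_mem_support _, (conedDist_self _).trans (by norm_num)⟩
      · intro z hz
        simp only [Walk.support_nil, List.mem_singleton] at hz
        subst hz
        simp
    | @cons _ y _ h w' =>
      rcases y with a' | c
      · -- ordinary Cayley edge
        obtain ⟨hne, hX⟩ := conedAdj_inl_inl.mp h
        have hadj : (relCayleyGraph G H X).Adj a a' :=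
          relAdj_iff.mpr ⟨hne, by
            rcases hX with h1 | h1
            · exact Or.inl (Set.mem_union_left _ h1)
            · exact Or.inr (Set.mem_union_left _ h1)⟩
        obtain ⟨p', hp', hs1, hs2⟩ := ih w' (by
          have := hw; rw [Walk.length_cons] at this; omega)
        refine ⟨Walk.cons hadj p', ?_, ?_, ?_⟩
        · rw [conedWalkLength_cons, Walk.length_cons]
          push_cast
          have : conedStepLength (H := H) (Sum.inl a) (Sum.inl a') = 1 := rfl
          rw [this]
          linarith
        · intro x hx
          rw [Walk.support_cons, List.mem_cons] at hx
          rcases hx with rfl | hx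
          · exact ⟨a, by simp [Walk.support_cons],
              (conedDist_self _).trans (by norm_num)⟩
          · obtain ⟨z, hz, hzd⟩ := hs1 x hx
            exact ⟨z, by simp [Walk.support_cons, hz], hzd⟩
        · intro z hz
          rw [Walk.support_cons, List.mem_cons] at hz
          rcases hz with rfl | hz
          · exact Walk.start_mem_support _
          · simp only [Walk.support_cons, List.mem_cons]
            exact Or.inr (hs2 z hz)
      · -- cone edge: the next step must come back to the group
        cases w' with
        | @cons _ y _ h₂ w'' =>
          rcases y with a' | c'
          swap
          · exact absurd h₂ (by simp [conedOffGraph])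
          · have hq : (a : G ⧸ H c.1) = (a' : G ⧸ H c.1) := by
              have h1 : (a : G ⧸ H c.1) = c.2 := h
              have h2 : (a' : G ⧸ H c.1) = c.2 := h₂
              rw [h1, h2]
            obtain ⟨p'', hp'', hs1, hs2⟩ := ih w'' (by
              have := hw
              rw [Walk.length_cons, Walk.length_cons] at this
              omega)
            have hlen : conedWalkLength (Walk.cons h (Walk.cons h₂ w''))
                = 1 + conedWalkLength w'' := by
              rw [conedWalkLength_cons, conedWalkLength_cons]
              have s1 : conedStepLength (H := H) (Sum.inl a) (Sum.inr c) = 1 / 2 := rfl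
              have s2 : conedStepLength (H := H) (Sum.inr c) (Sum.inl a') = 1 / 2 := rfl
              rw [s1, s2]; ring
            have hcone : conedDist G H X (.inr c) (.inl a') ≤ 1 / 2 :=
              conedDist_cone_right h₂
            by_cases ha : a = a'
            · subst ha
              refine ⟨p'', ?_, ?_, ?_⟩
              · rw [hlen]; linarith
              · intro x hx
                rw [Walk.support_cons, List.mem_cons] at hx
                rcases hx with rfl | hx
                · exact ⟨a, Walk.start_mem_support _,
                    (conedDist_self _).trans (by norm_num)⟩
                rw [Walk.support_cons, List.mem_cons] at hx
                rcases hx with rfl | hx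
                · exact ⟨a, Walk.start_mem_support _, hcone⟩
                · exact hs1 x hx
              · intro z hz
                simp only [Walk.support_cons, List.mem_cons]
                exact Or.inr (Or.inr (hs2 z hz))
            · have hadj : (relCayleyGraph G H X).Adj a a' :=
                relAdj_iff.mpr ⟨ha, Or.inl (Set.mem_union_right _
                  (Set.mem_iUnion.mpr ⟨c.1, QuotientGroup.eq.mp hq⟩))⟩
              refine ⟨Walk.cons hadj p'', ?_, ?_, ?_⟩
              · rw [hlen, Walk.length_cons]
                push_cast
                linarith
              · intro x hx
                rw [Walk.support_cons, List.mem_cons] at hx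
                rcases hx with rfl | hx
                · exact ⟨a, Walk.start_mem_support _,
                    (conedDist_self _).trans (by norm_num)⟩
                rw [Walk.support_cons, List.mem_cons] at hx
                rcases hx with rfl | hx
                · exact ⟨a', by simp [Walk.support_cons], hcone⟩
                · obtain ⟨z, hz, hzd⟩ := hs1 x hx
                  exact ⟨z, by simp [Walk.support_cons, hz], hzd⟩
              · intro z hz
                rw [Walk.support_cons, List.mem_cons] at hz
                rcases hz with rfl | hz
                · exact Walk.start_mem_support _
                · simp only [Walk.support_cons, List.mem_cons]
                  exact Or.inr (Or.inr (hs2 z hz))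

lemma proj_exists {a b : G} (w : (conedOffGraph G H X).Walk (.inl a) (.inl b)) :
    ∃ p : (relCayleyGraph G H X).Walk a b,
      (p.length : ℝ) ≤ conedWalkLength w ∧
      (∀ x ∈ w.support, ∃ z ∈ p.support, conedDist G H X x (.inl z) ≤ 1 / 2) ∧
      (∀ z ∈ p.support, Sum.inl z ∈ w.support) :=
  proj_exists_aux w.length w le_rfl

end Aux3
section Aux4

open SimpleGraph

variable {G : Type*} [Group G] {ι : Type*} {H : ι → Subgroup G} {X : Set G}

lemma rel_reachable (hXgen : Subgroup.closure X = ⊤) (a b : G) :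
    (relCayleyGraph G H X).Reachable a b := by
  have htop : Subgroup.closure (X ∪ ⋃ i, (H i : Set G)) = ⊤ := by
    rw [eq_top_iff, ← hXgen]
    exact Subgroup.closure_mono Set.subset_union_left
  have key : ∀ g ∈ Subgroup.closure (X ∪ ⋃ i, (H i : Set G)),
      ∀ c : G, (relCayleyGraph G H X).Reachable c (c * g) := by
    intro g hg
    induction hg using Subgroup.closure_induction with
    | mem x hx =>
      intro c
      by_cases hc : c = c * x
      · rw [← hc]
      · exact (relAdj_iff.mpr ⟨hc, Or.inl (by simpa using hx)⟩).reachable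
    | one => intro c; rw [mul_one]
    | mul x y hx hy ihx ihy =>
      intro c
      have := (ihx c).trans (ihy (c * x))
      rwa [mul_assoc] at this
    | inv x hx ihx =>
      intro c
      have := (ihx (c * x⁻¹)).symm
      rwa [inv_mul_cancel_right] at this
  have : a⁻¹ * b ∈ Subgroup.closure (X ∪ ⋃ i, (H i : Set G)) := by
    rw [htop]; trivial
  simpa using key _ this a

lemma coned_reachable (hXgen : Subgroup.closure X = ⊤) (u v : G ⊕ Σ i : ι, G ⧸ H i) :
    (conedOffGraph G H X).Reachable u v := by
  have hinl : ∀ a b : G, (conedOffGraph G H X).Reachable (.inl a) (.inl b) := by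
    intro a b
    obtain ⟨p⟩ := rel_reachable (H := H) hXgen a b
    obtain ⟨w, -, -, -⟩ := lift_exists p
    exact ⟨w⟩
  have hcone : ∀ c : Σ i : ι, G ⧸ H i, ∃ a : G,
      (conedOffGraph G H X).Adj (.inr c) (.inl a) := by
    intro c
    obtain ⟨a, ha⟩ := Quotient.exists_rep c.2
    exact ⟨a, conedAdj_inr_inl.mpr ha⟩
  rcases u with a | c <;> rcases v with b | d
  · exact hinl a b
  · obtain ⟨b', hb'⟩ := hcone d
    exact (hinl a b').trans hb'.symm.reachable
  · obtain ⟨a', ha'⟩ := hcone c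
    exact ha'.reachable.trans (hinl a' b)
  · obtain ⟨a', ha'⟩ := hcone c
    obtain ⟨b', hb'⟩ := hcone d
    exact ha'.reachable.trans ((hinl a' b').trans hb'.symm.reachable)

lemma conedDist_inl_inl (hXgen : Subgroup.closure X = ⊤) (a b : G) :
    conedDist G H X (.inl a) (.inl b) = ((relCayleyGraph G H X).dist a b : ℝ) := by
  apply le_antisymm
  · obtain ⟨p, hp⟩ := (rel_reachable (H := H) hXgen a b).exists_walk_length_eq_dist
    obtain ⟨w, hw, -, -⟩ := lift_exists p
    calc conedDist G H X (.inl a) (.inl b) ≤ conedWalkLength w := conedDist_le_walk w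
      _ = p.length := hw
      _ = _ := by rw [hp]
  · apply le_csInf
    · obtain ⟨w⟩ := coned_reachable (H := H) hXgen (.inl a) (.inl b)
      exact ⟨_, ⟨w, rfl⟩⟩
    · rintro x ⟨w, rfl⟩
      obtain ⟨p, hp, -, -⟩ := proj_exists w
      calc ((relCayleyGraph G H X).dist a b : ℝ) ≤ p.length := by
            exact_mod_cast SimpleGraph.dist_le p
        _ ≤ conedWalkLength w := hp

/-- A relative geodesic lifts to a coned geodesic. -/
lemma lift_geodesic (hXgen : Subgroup.closure X = ⊤) {a b : G}
    {p : (relCayleyGraph G H X).Walk a b} (hp : (relCayleyGraph G H X).IsGeodesic p)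
    {w : (conedOffGraph G H X).Walk (.inl a) (.inl b)}
    (hw : conedWalkLength w = p.length) : ConedIsGeodesic w := by
  intro q
  obtain ⟨p', hp', -, -⟩ := proj_exists q
  calc conedWalkLength w = p.length := hw
    _ = ((relCayleyGraph G H X).dist a b : ℝ) := by exact_mod_cast hp
    _ ≤ p'.length := by exact_mod_cast SimpleGraph.dist_le p'
    _ ≤ conedWalkLength q := hp'

/-- Coned geodesics realize the coned distance. -/
lemma coned_geodesic_length (hXgen : Subgroup.closure X = ⊤)
    {u v : G ⊕ Σ i : ι, G ⧸ H i} {w : (conedOffGraph G H X).Walk u v}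
    (hw : ConedIsGeodesic w) : conedWalkLength w = conedDist G H X u v := by
  refine le_antisymm ?_ (conedDist_le_walk w)
  obtain ⟨q, hq⟩ := coned_exists_min (coned_reachable (H := H) hXgen u v)
  exact hq ▸ hw q

/-- Sub-walks of coned geodesics are geodesics. -/
lemma coned_geodesic_tail {u v w : G ⊕ Σ i : ι, G ⧸ H i}
    {h : (conedOffGraph G H X).Adj u v} {p : (conedOffGraph G H X).Walk v w}
    (hp : ConedIsGeodesic (Walk.cons h p)) : ConedIsGeodesic p := by
  intro q
  have := hp (Walk.cons h q)
  rw [conedWalkLength_cons, conedWalkLength_cons] at this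
  linarith

lemma coned_geodesic_reverse {u v : G ⊕ Σ i : ι, G ⧸ H i}
    {p : (conedOffGraph G H X).Walk u v} (hp : ConedIsGeodesic p) :
    ConedIsGeodesic p.reverse := by
  intro q
  rw [conedWalkLength_reverse]
  calc conedWalkLength p ≤ conedWalkLength q.reverse := hp q.reverse
    _ = conedWalkLength q := conedWalkLength_reverse q

/-- Projection of a coned geodesic between group elements is a relative geodesic. -/
lemma proj_geodesic (hXgen : Subgroup.closure X = ⊤) {a b : G}
    {w : (conedOffGraph G H X).Walk (.inl a) (.inl b)} (hw : ConedIsGeodesic w)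
    {p : (relCayleyGraph G H X).Walk a b} (hp : (p.length : ℝ) ≤ conedWalkLength w) :
    (relCayleyGraph G H X).IsGeodesic p := by
  have h1 : ((relCayleyGraph G H X).dist a b : ℝ) ≤ p.length := by
    exact_mod_cast SimpleGraph.dist_le p
  have h2 : conedWalkLength w = ((relCayleyGraph G H X).dist a b : ℝ) := by
    rw [coned_geodesic_length hXgen hw, conedDist_inl_inl hXgen]
  have : (p.length : ℝ) = ((relCayleyGraph G H X).dist a b : ℝ) := by
    rw [h2] at hp
    linarith
  exact_mod_cast this

end Aux4
section Aux5

open SimpleGraph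

variable {G : Type*} [Group G] {ι : Type*} {H : ι → Subgroup G} {X : Set G}

lemma rel_geodesic_reverse {a b : G} {p : (relCayleyGraph G H X).Walk a b}
    (hp : (relCayleyGraph G H X).IsGeodesic p) :
    (relCayleyGraph G H X).IsGeodesic p.reverse := by
  unfold SimpleGraph.IsGeodesic at *
  rw [Walk.length_reverse, SimpleGraph.dist_comm]
  exact hp

/-- Corner reduction, when the walk ends at a group element. -/
lemma coned_corner_front (hXgen : Subgroup.closure X = ⊤) {u : G ⊕ Σ i : ι, G ⧸ H i}
    {b : G} (s : (conedOffGraph G H X).Walk u (.inl b)) (hs : ConedIsGeodesic s) :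
    ∃ (a : G) (t : (relCayleyGraph G H X).Walk a b),
      (relCayleyGraph G H X).IsGeodesic t ∧
      conedDist G H X u (.inl a) ≤ 1 / 2 ∧
      (∀ x ∈ s.support, ∃ z ∈ t.support, conedDist G H X x (.inl z) ≤ 1 / 2) ∧
      (∀ z ∈ t.support, ∃ x ∈ s.support, conedDist G H X (.inl z) x ≤ 1 / 2) := by
  rcases u with a | c
  · obtain ⟨p, hp, h1, h2⟩ := proj_exists s
    refine ⟨a, p, proj_geodesic hXgen hs hp,
      (conedDist_self _).trans (by norm_num), h1, ?_⟩
    intro z hz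
    exact ⟨.inl z, h2 z hz, (conedDist_self _).trans (by norm_num)⟩
  · cases s with
    | @cons _ y _ h s₂ =>
      rcases y with a₁ | c'
      swap
      · exact absurd h (by simp [conedOffGraph])
      obtain ⟨p, hp, h1, h2⟩ := proj_exists s₂
      have hs₂ : ConedIsGeodesic s₂ := coned_geodesic_tail hs
      have hc : conedDist G H X (.inr c) (.inl a₁) ≤ 1 / 2 := conedDist_cone_right h
      refine ⟨a₁, p, proj_geodesic hXgen hs₂ hp, hc, ?_, ?_⟩
      · intro x hx
        rw [Walk.support_cons, List.mem_cons] at hx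
        rcases hx with rfl | hx
        · exact ⟨a₁, Walk.start_mem_support _, hc⟩
        · exact h1 x hx
      · intro z hz
        exact ⟨.inl z, by simp [Walk.support_cons, h2 z hz],
          (conedDist_self _).trans (by norm_num)⟩

/-- Corner reduction: any coned geodesic is, up to distance `1/2`, a relative
geodesic. -/
lemma coned_corner (hXgen : Subgroup.closure X = ⊤) {u v : G ⊕ Σ i : ι, G ⧸ H i}
    (s : (conedOffGraph G H X).Walk u v) (hs : ConedIsGeodesic s) :
    ∃ (a b : G) (t : (relCayleyGraph G H X).Walk a b),
      (relCayleyGraph G H X).IsGeodesic t ∧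
      conedDist G H X u (.inl a) ≤ 1 / 2 ∧
      conedDist G H X v (.inl b) ≤ 1 / 2 ∧
      (∀ x ∈ s.support, ∃ z ∈ t.support, conedDist G H X x (.inl z) ≤ 1 / 2) ∧
      (∀ z ∈ t.support, ∃ x ∈ s.support, conedDist G H X (.inl z) x ≤ 1 / 2) := by
  have main : ∀ {a : G} (s' : (conedOffGraph G H X).Walk (.inl a) v),
      ConedIsGeodesic s' →
      ∃ (b : G) (t : (relCayleyGraph G H X).Walk a b),
        (relCayleyGraph G H X).IsGeodesic t ∧
        conedDist G H X v (.inl b) ≤ 1 / 2 ∧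
        (∀ x ∈ s'.support, ∃ z ∈ t.support, conedDist G H X x (.inl z) ≤ 1 / 2) ∧
        (∀ z ∈ t.support, ∃ x ∈ s'.support, conedDist G H X (.inl z) x ≤ 1 / 2) := by
    intro a s' hs'
    obtain ⟨b', t', ht', hb', hsup1, hsup2⟩ :=
      coned_corner_front hXgen s'.reverse (coned_geodesic_reverse hs')
    refine ⟨b', t'.reverse, rel_geodesic_reverse ht', hb', ?_, ?_⟩
    · intro x hx
      have hx' : x ∈ s'.reverse.support := by
        rw [Walk.support_reverse, List.mem_reverse]; exact hx
      obtain ⟨z, hz, hzd⟩ := hsup1 x hx'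
      refine ⟨z, ?_, hzd⟩
      rw [Walk.support_reverse, List.mem_reverse]; exact hz
    · intro z hz
      rw [Walk.support_reverse, List.mem_reverse] at hz
      obtain ⟨x, hx, hxd⟩ := hsup2 z hz
      refine ⟨x, ?_, hxd⟩
      rw [Walk.support_reverse, List.mem_reverse] at hx; exact hx
  rcases u with a | c
  · obtain ⟨b', t, ht, hb', h1, h2⟩ := main s hs
    exact ⟨a, b', t, ht, (conedDist_self _).trans (by norm_num), hb', h1, h2⟩
  · cases s with
    | nil =>
      obtain ⟨a, ha⟩ := Quotient.exists_rep c.2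
      have hadj : (conedOffGraph G H X).Adj (.inr c) (.inl a) := conedAdj_inr_inl.mpr ha
      have hd : conedDist G H X (.inr c) (.inl a) ≤ 1 / 2 := conedDist_cone_right hadj
      refine ⟨a, a, Walk.nil, ?_, hd, hd, ?_, ?_⟩
      · unfold SimpleGraph.IsGeodesic
        simp [SimpleGraph.dist_self]
      · intro x hx
        simp only [Walk.support_nil, List.mem_singleton] at hx
        subst hx
        exact ⟨a, Walk.start_mem_support _, hd⟩
      · intro z hz
        simp only [Walk.support_nil, List.mem_singleton] at hz
        subst hz
        rw [conedDist_symm] at hd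
        exact ⟨.inr c, Walk.start_mem_support _, hd⟩
    | @cons _ y _ h s₂ =>
      rcases y with a₁ | c'
      swap
      · exact absurd h (by simp [conedOffGraph])
      have hs₂ : ConedIsGeodesic s₂ := coned_geodesic_tail hs
      obtain ⟨b', t, ht, hb', hsup1, hsup2⟩ := main s₂ hs₂
      have hc : conedDist G H X (.inr c) (.inl a₁) ≤ 1 / 2 := conedDist_cone_right h
      refine ⟨a₁, b', t, ht, hc, hb', ?_, ?_⟩
      · intro x hx
        rw [Walk.support_cons, List.mem_cons] at hx
        rcases hx with rfl | hx
        · exact ⟨a₁, Walk.start_mem_support _, hc⟩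
        · exact hsup1 x hx
      · intro z hz
        obtain ⟨x, hx, hxd⟩ := hsup2 z hz
        exact ⟨x, by simp [Walk.support_cons, hx], hxd⟩

end Aux5
section Aux6

open SimpleGraph

variable {V : Type*} {Γ : SimpleGraph V}

lemma dist_start_le_of_mem_support {a b z : V} (w : Γ.Walk a b) (hz : z ∈ w.support) :
    Γ.dist a z ≤ w.length := by
  classical
  calc Γ.dist a z ≤ (w.takeUntil z hz).length := SimpleGraph.dist_le _
    _ ≤ w.length := Walk.length_takeUntil_le w hz

lemma dist_end_le_of_mem_support {a b z : V} (w : Γ.Walk a b) (hz : z ∈ w.support) :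
    Γ.dist z b ≤ w.length := by
  classical
  calc Γ.dist z b ≤ (w.dropUntil z hz).length := SimpleGraph.dist_le _
    _ ≤ w.length := Walk.length_dropUntil_le w hz

/-- Thinness of geodesic triangles with slightly perturbed corners. -/
lemma perturbed_thin (hconn : ∀ a b : V, Γ.Reachable a b) {δ : ℕ}
    (hδ : ∀ (u v w : V) (p : Γ.Walk u v) (q : Γ.Walk v w) (r : Γ.Walk u w),
      Γ.IsGeodesic p → Γ.IsGeodesic q → Γ.IsGeodesic r →
      ∀ x ∈ r.support, ∃ y, (y ∈ p.support ∨ y ∈ q.support) ∧ Γ.dist x y ≤ δ)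
    {a₁ b₁ a₂ b₂ a₃ b₃ : V}
    (P : Γ.Walk a₁ b₁) (Q : Γ.Walk a₂ b₂) (R : Γ.Walk a₃ b₃)
    (hP : Γ.IsGeodesic P) (hQ : Γ.IsGeodesic Q) (hR : Γ.IsGeodesic R)
    (h1 : Γ.dist a₃ a₁ ≤ 1) (h2 : Γ.dist b₁ a₂ ≤ 1) (h3 : Γ.dist b₂ b₃ ≤ 1) :
    ∀ x ∈ R.support, ∃ y, (y ∈ P.support ∨ y ∈ Q.support) ∧ Γ.dist x y ≤ 4 * δ + 3 := by
  have hne : Nonempty V := ⟨a₁⟩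
  have hconn' : Γ.Connected := ⟨hconn⟩
  have tri : ∀ x y z : V, Γ.dist x z ≤ Γ.dist x y + Γ.dist y z :=
    fun x y z => hconn'.dist_triangle
  obtain ⟨e₁, he₁⟩ := (hconn a₃ a₁).exists_walk_length_eq_dist
  obtain ⟨e₂, he₂⟩ := (hconn b₁ a₂).exists_walk_length_eq_dist
  obtain ⟨e₃, he₃⟩ := (hconn b₂ b₃).exists_walk_length_eq_dist
  obtain ⟨S₁, hS₁⟩ := (hconn a₁ b₃).exists_walk_length_eq_dist
  obtain ⟨S₂, hS₂⟩ := (hconn a₁ b₂).exists_walk_length_eq_dist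
  obtain ⟨P', hP'⟩ := (hconn a₁ a₂).exists_walk_length_eq_dist
  intro x hx
  -- Step 1: move from R to S₁
  obtain ⟨y₁, hy₁mem, hy₁⟩ := hδ a₃ a₁ b₃ e₁ S₁ R he₁ hS₁ hR x hx
  have step1 : ∃ y ∈ S₁.support, Γ.dist x y ≤ δ + 1 := by
    rcases hy₁mem with hm | hm
    · have : Γ.dist y₁ a₁ ≤ 1 := by
        calc Γ.dist y₁ a₁ ≤ e₁.length := dist_end_le_of_mem_support e₁ hm
          _ = Γ.dist a₃ a₁ := he₁
          _ ≤ 1 := h1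
      exact ⟨a₁, Walk.start_mem_support _, (tri x y₁ a₁).trans (by omega)⟩
    · exact ⟨y₁, hm, by omega⟩
  obtain ⟨z₁, hz₁mem, hz₁⟩ := step1
  -- Step 2: move from S₁ to S₂ ∪ Q
  obtain ⟨y₂, hy₂mem, hy₂⟩ := hδ a₁ b₂ b₃ S₂ e₃ S₁ hS₂ he₃ hS₁ z₁ hz₁mem
  have step2 : ∃ y, (y ∈ S₂.support ∨ y ∈ Q.support) ∧ Γ.dist z₁ y ≤ δ + 1 := by
    rcases hy₂mem with hm | hm
    · exact ⟨y₂, Or.inl hm, by omega⟩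
    · have : Γ.dist y₂ b₂ ≤ 1 := by
        rw [SimpleGraph.dist_comm]
        calc Γ.dist b₂ y₂ ≤ e₃.length := dist_start_le_of_mem_support e₃ hm
          _ = Γ.dist b₂ b₃ := he₃
          _ ≤ 1 := h3
      exact ⟨b₂, Or.inr (Walk.end_mem_support _), (tri z₁ y₂ b₂).trans (by omega)⟩
  obtain ⟨z₂, hz₂mem, hz₂⟩ := step2
  rcases hz₂mem with hz₂mem | hz₂mem
  swap
  · -- already on Q
    exact ⟨z₂, Or.inr hz₂mem, (tri x z₁ z₂).trans (by omega)⟩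
  -- Step 3: move from S₂ to P' ∪ Q
  obtain ⟨y₃, hy₃mem, hy₃⟩ := hδ a₁ a₂ b₂ P' Q S₂ hP' hQ hS₂ z₂ hz₂mem
  rcases hy₃mem with hy₃mem | hy₃mem
  swap
  · exact ⟨y₃, Or.inr hy₃mem,
      (tri x z₁ y₃).trans (by have := tri z₁ z₂ y₃; omega)⟩
  -- Step 4: move from P' to P
  obtain ⟨y₄, hy₄mem, hy₄⟩ := hδ a₁ b₁ a₂ P e₂ P' hP he₂ hP' y₃ hy₃mem
  have step4 : ∃ y ∈ P.support, Γ.dist y₃ y ≤ δ + 1 := by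
    rcases hy₄mem with hm | hm
    · exact ⟨y₄, hm, by omega⟩
    · have : Γ.dist y₄ b₁ ≤ 1 := by
        rw [SimpleGraph.dist_comm]
        calc Γ.dist b₁ y₄ ≤ e₂.length := dist_start_le_of_mem_support e₂ hm
          _ = Γ.dist b₁ a₂ := he₂
          _ ≤ 1 := h2
      exact ⟨b₁, Walk.end_mem_support _, (tri y₃ y₄ b₁).trans (by omega)⟩
  obtain ⟨z₄, hz₄mem, hz₄⟩ := step4
  refine ⟨z₄, Or.inl hz₄mem, ?_⟩
  have t1 := tri x z₁ z₄
  have t2 := tri z₁ z₂ z₄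
  have t3 := tri z₂ y₃ z₄
  omega

end Aux6
/-- **Lemma (Osin, Lemma 2.4, (i) ⇔ (iii)).** Let `G` be a group, `H 0, …, H (m-1)`
subgroups of `G`, and `X` a finite generating set of `G` (in the usual, non-relative,
sense). Then the relative Cayley graph of `G` with respect to the `H i` is hyperbolic if
and only if the coned-off Cayley graph of `G` with respect to the `H i` is hyperbolic. -/
theorem relCayleyGraph_isHyperbolic_iff_conedOff_isHyperbolic {G : Type*} [Group G]
    {m : ℕ} (H : Fin m → Subgroup G) (X : Set G) (hXfin : X.Finite)
    (hXgen : Subgroup.closure X = ⊤) :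
    (relCayleyGraph G H X).IsHyperbolic ↔ ConedOffIsHyperbolic G H X := by
  open SimpleGraph in
  constructor
  · rintro ⟨δ, hδ⟩
    refine ⟨4 * δ + 4, by positivity, ?_⟩
    intro u v w p q r hp hq hr x hx
    obtain ⟨a₁, b₁, P, hP, hPu, hPv, hPs1, hPs2⟩ := coned_corner hXgen p hp
    obtain ⟨a₂, b₂, Q, hQ, hQv, hQw, hQs1, hQs2⟩ := coned_corner hXgen q hq
    obtain ⟨a₃, b₃, R, hR, hRu, hRw, hRs1, hRs2⟩ := coned_corner hXgen r hr
    have tri : ∀ x y z : G ⊕ Σ i : Fin m, G ⧸ H i,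
        conedDist G H X x z ≤ conedDist G H X x y + conedDist G H X y z :=
      fun x y z => conedDist_triangle (coned_reachable hXgen _ _) (coned_reachable hXgen _ _)
    have corner : ∀ (c c' : G) (z : G ⊕ Σ i : Fin m, G ⧸ H i),
        conedDist G H X z (.inl c) ≤ 1 / 2 → conedDist G H X z (.inl c') ≤ 1 / 2 →
        (relCayleyGraph G H X).dist c c' ≤ 1 := by
      intro c c' z hc hc'
      have : conedDist G H X (.inl c) (.inl c') ≤ 1 := by
        have h := tri (.inl c) z (.inl c')
        rw [conedDist_symm (Sum.inl c) z] at h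
        linarith
      rw [conedDist_inl_inl hXgen] at this
      exact_mod_cast this
    have h1 : (relCayleyGraph G H X).dist a₃ a₁ ≤ 1 := corner _ _ u hRu hPu
    have h2 : (relCayleyGraph G H X).dist b₁ a₂ ≤ 1 := corner _ _ v hPv hQv
    have h3 : (relCayleyGraph G H X).dist b₂ b₃ ≤ 1 := corner _ _ w hQw hRw
    obtain ⟨z, hzmem, hzd⟩ := hRs1 x hx
    obtain ⟨y, hymem, hyd⟩ := perturbed_thin (rel_reachable hXgen) hδ P Q R hP hQ hR
      h1 h2 h3 z hzmem
    rcases hymem with hymem | hymem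
    · obtain ⟨x', hx'mem, hx'd⟩ := hPs2 y hymem
      refine ⟨x', Or.inl hx'mem, ?_⟩
      have hd : conedDist G H X (.inl z) (.inl y)
          = ((relCayleyGraph G H X).dist z y : ℝ) := conedDist_inl_inl hXgen z y
      have hcast : ((relCayleyGraph G H X).dist z y : ℝ) ≤ 4 * δ + 3 := by
        exact_mod_cast hyd
      have t1 := tri x (.inl z) x'
      have t2 := tri (.inl z) (.inl y) x'
      push_cast
      linarith
    · obtain ⟨x', hx'mem, hx'd⟩ := hQs2 y hymem
      refine ⟨x', Or.inr hx'mem, ?_⟩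
      have hd : conedDist G H X (.inl z) (.inl y)
          = ((relCayleyGraph G H X).dist z y : ℝ) := conedDist_inl_inl hXgen z y
      have hcast : ((relCayleyGraph G H X).dist z y : ℝ) ≤ 4 * δ + 3 := by
        exact_mod_cast hyd
      have t1 := tri x (.inl z) x'
      have t2 := tri (.inl z) (.inl y) x'
      push_cast
      linarith
  · rintro ⟨δ, hδ0, hδ⟩
    refine ⟨⌈δ⌉₊ + 1, ?_⟩
    intro u v w p q r hp hq hr x hx
    obtain ⟨wp, hwp, hwps1, hwps2⟩ := lift_exists p
    obtain ⟨wq, hwq, hwqs1, hwqs2⟩ := lift_exists q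
    obtain ⟨wr, hwr, hwrs1, hwrs2⟩ := lift_exists r
    obtain ⟨y, hymem, hyd⟩ := hδ (.inl u) (.inl v) (.inl w) wp wq wr
      (lift_geodesic hXgen hp hwp) (lift_geodesic hXgen hq hwq)
      (lift_geodesic hXgen hr hwr) (.inl x) (hwrs2 x hx)
    have tri : ∀ x y z : G ⊕ Σ i : Fin m, G ⧸ H i,
        conedDist G H X x z ≤ conedDist G H X x y + conedDist G H X y z :=
      fun x y z => conedDist_triangle (coned_reachable hXgen _ _) (coned_reachable hXgen _ _)
    have final : ∀ z : G, conedDist G H X y (.inl z) ≤ 1 / 2 →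
        (relCayleyGraph G H X).dist x z ≤ ⌈δ⌉₊ + 1 := by
      intro z hz
      have h := tri (.inl x) y (.inl z)
      rw [conedDist_inl_inl hXgen] at h
      have hle : ((relCayleyGraph G H X).dist x z : ℝ) ≤ δ + 1 / 2 := by linarith
      have hceil : δ ≤ (⌈δ⌉₊ : ℝ) := Nat.le_ceil δ
      have : ((relCayleyGraph G H X).dist x z : ℝ) ≤ (⌈δ⌉₊ : ℝ) + 1 := by linarith
      exact_mod_cast this
    rcases hymem with hymem | hymem
    · obtain ⟨z, hzmem, hzd⟩ := hwps1 y hymem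
      exact ⟨z, Or.inl hzmem, final z hzd⟩
    · obtain ⟨z, hzmem, hzd⟩ := hwqs1 y hymem
      exact ⟨z, Or.inr hzmem, final z hzd⟩
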